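/- Let s_1,…,s_m be a closed lattice path, let h be the number of steps equal to (1,0) and v the number of steps equal to (0,1), and let A := Σ_{v=1}^m (p_{v−1})_x · (s_v)_y be its discrete signed area. Then |A| ≤ h·v. -/

import Mathlib

/-- A step of a lattice path: one of `(1,0)`, `(-1,0)`, `(0,1)`, `(0,-1)`. -/
def IsStep (p : ℤ × ℤ) : Prop :=
  p = (1, 0) ∨ p = (-1, 0) ∨ p = (0, 1) ∨ p = (0, -1)

/-- The discrete signed area of a lattice path `s = (s_1, …, s_m)`:
`A = ∑_{v=1}^m (p_{v-1})_x · (s_v)_y`, where `p_v = s_1 + ⋯ + s_v`. -/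
def discreteArea (s : List (ℤ × ℤ)) : ℤ :=
  ∑ v : Fin s.length, ((s.take (v : ℕ)).sum).1 * (s.get v).2

lemma count_eq_card {α : Type*} [BEq α] [LawfulBEq α] [DecidableEq α] (s : List α) (a : α) :
    s.count a = (Finset.univ.filter fun i : Fin s.length => s.get i = a).card := by
  rw [Finset.card_filter]
  induction s with
  | nil => simp
  | cons b t ih =>
      rw [List.count_cons, ih,
        show (∑ i : Fin (b :: t).length, if (b :: t).get i = a then 1 else 0)
          = ∑ i : Fin (t.length + 1), if (b :: t).get ⟨i, by simpa using i.isLt⟩ = a then 1 else 0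
          from rfl, Fin.sum_univ_succ]
      simp [add_comm]
      exact if_congr Iff.rfl rfl rfl

lemma sum_fst_bounds (t : List (ℤ × ℤ)) (ht : ∀ p ∈ t, IsStep p) :
    -((t.count ((-1:ℤ),(0:ℤ)) : ℤ)) ≤ t.sum.1 ∧ t.sum.1 ≤ t.count ((1:ℤ),(0:ℤ)) := by
  induction t with
  | nil => simp
  | cons p q ih =>
      have hp := ht p (by simp)
      obtain ⟨h1, h2⟩ := ih (fun r hr => ht r (List.mem_cons_of_mem _ hr))
      rcases hp with h | h | h | h <;> subst h <;>
        simp [List.count_cons, List.sum_cons, Prod.ext_iff] <;> push_cast <;> omega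

lemma sum_fst_eq (t : List (ℤ × ℤ)) (ht : ∀ p ∈ t, IsStep p) :
    t.sum.1 = (t.count ((1:ℤ),(0:ℤ)) : ℤ) - t.count ((-1:ℤ),(0:ℤ)) := by
  induction t with
  | nil => simp
  | cons p q ih =>
      have hp := ht p (by simp)
      have h2 := ih (fun r hr => ht r (List.mem_cons_of_mem _ hr))
      rcases hp with h | h | h | h <;> subst h <;>
        simp [List.count_cons, List.sum_cons, Prod.ext_iff, h2] <;> push_cast <;> omega

lemma sum_snd_eq (t : List (ℤ × ℤ)) (ht : ∀ p ∈ t, IsStep p) :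
    t.sum.2 = (t.count ((0:ℤ),(1:ℤ)) : ℤ) - t.count ((0:ℤ),(-1:ℤ)) := by
  induction t with
  | nil => simp
  | cons p q ih =>
      have hp := ht p (by simp)
      have h2 := ih (fun r hr => ht r (List.mem_cons_of_mem _ hr))
      rcases hp with h | h | h | h <;> subst h <;>
        simp [List.count_cons, List.sum_cons, Prod.ext_iff, h2] <;> push_cast <;> omega

lemma take_sub (s : List (ℤ × ℤ)) (a b : ℕ) (hab : b ≤ a) :
    (s.take a).sum.1 - (s.take b).sum.1 = ((s.drop b).take (a - b)).sum.1 := by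
  have : s.take a = s.take b ++ (s.drop b).take (a - b) := by
    rw [← List.take_add, Nat.add_sub_cancel' hab]
  rw [this, List.sum_append, Prod.fst_add]; ring

lemma seg_mem (s : List (ℤ × ℤ)) (a b : ℕ) : ∀ p ∈ (s.drop b).take (a - b), p ∈ s :=
  fun p hp => ((List.take_sublist _ _).trans (List.drop_sublist _ _)).subset hp

lemma seg_count (s : List (ℤ × ℤ)) (a b : ℕ) (q : ℤ × ℤ) :
    ((s.drop b).take (a - b)).count q ≤ s.count q :=
  ((List.take_sublist _ _).trans (List.drop_sublist _ _)).count_le q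

/-- For a closed lattice path with `h` steps equal to `(1,0)` and
`v` steps equal to `(0,1)`, the discrete signed area satisfies `|A| ≤ h·v`. -/
theorem abs_discreteArea_le (s : List (ℤ × ℤ))
    (hs : ∀ p ∈ s, IsStep p) (hclosed : s.sum = 0)
    (h v : ℕ) (hh : h = s.count ((1 : ℤ), (0 : ℤ))) (hv : v = s.count ((0 : ℤ), (1 : ℤ))) :
    |discreteArea s| ≤ (h : ℤ) * v := by
  set n := s.length with hn
  set x : ℕ → ℤ := fun k => (s.take k).sum.1 with hxdef
  have hs1 := sum_fst_eq s hs
  have hs2 := sum_snd_eq s hs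
  rw [hclosed] at hs1 hs2
  simp only [Prod.fst_zero, Prod.snd_zero] at hs1 hs2
  have hcneg : s.count ((-1:ℤ),(0:ℤ)) = h := by omega
  have hcdown : s.count ((0:ℤ),(-1:ℤ)) = v := by omega
  -- key bound
  have hxd : ∀ a b : ℕ, x a - x b ≤ (h : ℤ) := by
    intro a b
    rcases le_total b a with hab | hab
    · rw [hxdef]; simp only
      rw [take_sub s a b hab]
      calc ((s.drop b).take (a-b)).sum.1
          ≤ ((s.drop b).take (a-b)).count ((1:ℤ),(0:ℤ)) :=
            (sum_fst_bounds _ (fun p hp => hs p (seg_mem s a b p hp))).2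
        _ ≤ (s.count ((1:ℤ),(0:ℤ)) : ℤ) := by exact_mod_cast seg_count s a b _
        _ = (h : ℤ) := by rw [hh]
    · have : x b - x a ≥ -(h : ℤ) := by
        rw [hxdef]; simp only
        rw [take_sub s b a hab]
        calc (-(h:ℤ)) = -(((s.count ((-1:ℤ),(0:ℤ))) : ℤ)) := by rw [hcneg]
          _ ≤ -((((s.drop a).take (b-a)).count ((-1:ℤ),(0:ℤ))) : ℤ) := by
              have := seg_count s b a ((-1:ℤ),(0:ℤ)); omega
          _ ≤ _ := (sum_fst_bounds _ (fun p hp => hs p (seg_mem s b a p hp))).1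
      linarith
  -- partition
  set P := Finset.univ.filter (fun i : Fin n => s.get i = ((0:ℤ),(1:ℤ))) with hPdef
  set N := Finset.univ.filter (fun i : Fin n => s.get i = ((0:ℤ),(-1:ℤ))) with hNdef
  have hPcard : P.card = v := by
    have h' := hv
    rw [count_eq_card] at h'
    rw [hPdef]; exact h'.symm
  have hNcard : N.card = v := by
    have h' := hcdown
    rw [count_eq_card] at h'
    rw [hNdef]; exact h'
  have hA : discreteArea s = (∑ i ∈ P, x i) - ∑ i ∈ N, x i := by
    show (∑ i : Fin n, x i * (s.get i).2) = _
    rw [hPdef, hNdef, Finset.sum_filter, Finset.sum_filter, ← Finset.sum_sub_distrib]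
    refine Finset.sum_congr rfl fun i _ => ?_
    rcases hs (s.get i) (s.get_mem _) with hg | hg | hg | hg <;> rw [hg] <;>
      simp [Prod.ext_iff]
  have hcard : P.card = N.card := by rw [hPcard, hNcard]
  let e := Finset.equivOfCardEq hcard
  have hNsum : ∑ i ∈ N, x i = ∑ i ∈ P.attach, x ((e i : Fin n) : ℕ) := by
    rw [← Finset.sum_attach N (fun i => x (i : ℕ)), Finset.attach_eq_univ,
      Finset.attach_eq_univ]
    exact (Equiv.sum_comp e (fun b : {i // i ∈ N} => x ((b : Fin n) : ℕ))).symm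
  have hAeq : discreteArea s = ∑ i ∈ P.attach, (x ((i : Fin n) : ℕ) - x ((e i : Fin n) : ℕ)) := by
    rw [hA, hNsum, ← (Finset.sum_attach P (fun i => x (i : ℕ))), ← Finset.sum_sub_distrib]
  have hfin : |discreteArea s| ≤ ((h : ℤ)) * v := by
    calc |discreteArea s| ≤ ∑ i ∈ P.attach, |x ((i : Fin n) : ℕ) - x ((e i : Fin n) : ℕ)| := by
          rw [hAeq]; exact Finset.abs_sum_le_sum_abs _ _
      _ ≤ ∑ _i ∈ P.attach, (h : ℤ) :=
          Finset.sum_le_sum fun i _ => abs_sub_le_iff.mpr ⟨hxd _ _, hxd _ _⟩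
      _ = (P.card : ℤ) * h := by rw [Finset.sum_const, Finset.card_attach]; simp
      _ = (h : ℤ) * v := by rw [hPcard]; ring
  exact hfin
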